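/- Geometric decay of successive differences (inequality (3.30)). Let {v_m}_{m≥0} be a sequence of measurable functions on X×(0,∞) with 0 ≤ v_m(x,t) ≤ M a.e. for all m, satisfying φ^{(m)}(σ*) v_{m+1}(x,t) ≤ v_{m+2}(x,t) ≤ v_{m+1}(x,t) for all m ∈ ℕ, a.e. x and a.e. t, where φ^{(m)} is the m-fold iterate of φ. Then for every ε ∈ (0,1), setting k := (1 − φ(εσ*))/(1 − εσ*), one has 0 ≤ v_{m+1}(x,t) − v_{m+2}(x,t) ≤ M (1 − σ*) k^m for all m ∈ ℕ, a.e. x ∈ X and a.e. t > 0; consequently 0 ≤ v_{m+1}(x,t) − v_{m+p+2}(x,t) ≤ M(1−σ*) k^m/(1−k) for all m, p ∈ ℕ whenever k < 1, so {v_m} converges uniformly a.e. -/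

import Mathlib

open MeasureTheory Set Filter Function

/-- **Geometric decay of successive differences (inequality (3.30)).**
If `0 ≤ v m ≤ M` a.e. and `φ^[m] σ* · v (m+1) ≤ v (m+2) ≤ v (m+1)` a.e. for
all `m`, then for every `ε ∈ (0,1)`, with `k := (1 - φ(ε σ*))/(1 - ε σ*)`,
`0 ≤ v (m+1) - v (m+2) ≤ M (1-σ*) k^m` a.e.; consequently, if `k < 1`,
`0 ≤ v (m+1) - v (m+p+2) ≤ M (1-σ*) k^m / (1-k)` a.e. for all `m, p`, and
the sequence converges uniformly a.e. -/
theorem geometric_decay_successive_differences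
    {X : Type*} [MeasurableSpace X] (μ : Measure X) [SigmaFinite μ]
    (φ : ℝ → ℝ) (σs M : ℝ)
    (hφ_cont : ContinuousOn φ (Icc 0 1))
    (hφ0 : φ 0 = 0) (hφ1 : φ 1 = 1)
    (hφ_mono : StrictMonoOn φ (Icc 0 1))
    (hφ_conc : ConcaveOn ℝ (Icc 0 1) φ)
    (hσs : σs ∈ Ioo (0:ℝ) 1) (hM : 0 < M)
    (v : ℕ → X → ℝ → ℝ)
    (hv_meas : ∀ m, Measurable fun q : X × ℝ => v m q.1 q.2)
    (hv_bdd : ∀ m, ∀ᵐ q ∂(μ.prod (volume.restrict (Ioi (0:ℝ)))),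
      0 ≤ v m q.1 q.2 ∧ v m q.1 q.2 ≤ M)
    (hv_sandwich : ∀ m : ℕ, ∀ᵐ q ∂(μ.prod (volume.restrict (Ioi (0:ℝ)))),
      φ^[m] σs * v (m + 1) q.1 q.2 ≤ v (m + 2) q.1 q.2 ∧
      v (m + 2) q.1 q.2 ≤ v (m + 1) q.1 q.2) :
    ∀ ε ∈ Ioo (0:ℝ) 1, ∀ k : ℝ, k = (1 - φ (ε * σs)) / (1 - ε * σs) →
      (∀ m : ℕ, ∀ᵐ q ∂(μ.prod (volume.restrict (Ioi (0:ℝ)))),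
        0 ≤ v (m + 1) q.1 q.2 - v (m + 2) q.1 q.2 ∧
        v (m + 1) q.1 q.2 - v (m + 2) q.1 q.2 ≤ M * (1 - σs) * k ^ m) ∧
      (k < 1 →
        (∀ m p : ℕ, ∀ᵐ q ∂(μ.prod (volume.restrict (Ioi (0:ℝ)))),
          0 ≤ v (m + 1) q.1 q.2 - v (m + p + 2) q.1 q.2 ∧
          v (m + 1) q.1 q.2 - v (m + p + 2) q.1 q.2 ≤
            M * (1 - σs) / (1 - k) * k ^ m) ∧
        ∃ w : X → ℝ → ℝ, ∀ δ > (0:ℝ), ∃ N : ℕ, ∀ m ≥ N,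
          ∀ᵐ q ∂(μ.prod (volume.restrict (Ioi (0:ℝ)))),
            |v m q.1 q.2 - w q.1 q.2| ≤ δ) := by
  obtain ⟨hσ0, hσ1⟩ := hσs
  rintro ε ⟨hε0, hε1⟩ k hk
  set a := ε * σs with ha
  have ha0 : 0 < a := mul_pos hε0 hσ0
  have haσ : a < σs := by nlinarith
  have ha1 : a < 1 := haσ.trans hσ1
  have hmono := hφ_mono.monotoneOn
  have hφa1 : φ a < 1 := by
    have := hφ_mono ⟨ha0.le, ha1.le⟩ ⟨zero_le_one, le_refl (1:ℝ)⟩ ha1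
    rwa [hφ1] at this
  have hk0 : 0 < k := by
    rw [hk]; exact div_pos (by linarith) (by linarith)
  -- φ maps [0,1] into [0,1]
  have hφmem : ∀ s, s ∈ Icc (0:ℝ) 1 → φ s ∈ Icc (0:ℝ) 1 := by
    intro s hs
    constructor
    · have := hmono (left_mem_Icc.2 zero_le_one) hs hs.1
      rwa [hφ0] at this
    · have := hmono hs (right_mem_Icc.2 zero_le_one) hs.2
      rwa [hφ1] at this
  have hφge : ∀ s, s ∈ Icc (0:ℝ) 1 → s ≤ φ s := by
    intro s hs
    have hcc := hφ_conc.2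
    have h := hcc (right_mem_Icc.2 zero_le_one) (left_mem_Icc.2 zero_le_one)
      (a := s) (b := 1 - s) hs.1 (by linarith [hs.2]) (by ring)
    simpa [hφ0, hφ1] using h
  -- chord inequality
  have hchord : ∀ s, a ≤ s → s ≤ 1 → 1 - φ s ≤ k * (1 - s) := by
    intro s hsa hs1
    have h1a : 0 < 1 - a := by linarith
    set lam := (1 - s) / (1 - a) with hlam
    have hlam0 : 0 ≤ lam := div_nonneg (by linarith) h1a.le
    have hmu0 : 0 ≤ 1 - lam := by
      have h' : 1 - lam = (s - a) / (1 - a) := by rw [hlam]; field_simp; ring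
      rw [h']; exact div_nonneg (by linarith) h1a.le
    have hcomb : lam • a + (1 - lam) • (1:ℝ) = s := by
      simp only [smul_eq_mul, mul_one]
      rw [hlam]
      field_simp
      ring
    have hcc := hφ_conc.2
    have h := hcc ⟨ha0.le, ha1.le⟩ (right_mem_Icc.2 zero_le_one)
      (a := lam) (b := 1 - lam) hlam0 hmu0 (by ring)
    rw [hcomb, hφ1, smul_eq_mul, smul_eq_mul, mul_one] at h
    have hlk : lam * (1 - φ a) = k * (1 - s) := by
      rw [hk, hlam]; field_simp
    nlinarith [h, hlk]
  -- facts about the iterates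
  have hiter : ∀ m : ℕ, σs ≤ φ^[m] σs ∧ φ^[m] σs ≤ 1 ∧
      1 - φ^[m] σs ≤ k ^ m * (1 - σs) := by
    intro m
    induction m with
    | zero => exact ⟨le_refl _, hσ1.le, by simp⟩
    | succ n ih =>
      obtain ⟨h1, h2, h3⟩ := ih
      rw [Function.iterate_succ_apply']
      have hmem : φ^[n] σs ∈ Icc (0:ℝ) 1 := ⟨by linarith, h2⟩
      refine ⟨h1.trans (hφge _ hmem), (hφmem _ hmem).2, ?_⟩
      have hc := hchord (φ^[n] σs) (by linarith) h2
      have : k * (1 - φ^[n] σs) ≤ k * (k ^ n * (1 - σs)) :=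
        mul_le_mul_of_nonneg_left h3 hk0.le
      calc 1 - φ (φ^[n] σs) ≤ k * (1 - φ^[n] σs) := hc
        _ ≤ k * (k ^ n * (1 - σs)) := this
        _ = k ^ (n + 1) * (1 - σs) := by rw [pow_succ]; ring
  set C := M * (1 - σs) / (1 - k) with hC
  -- the full-measure set of good points
  have hA : ∀ᵐ q ∂(μ.prod (volume.restrict (Ioi (0:ℝ)))),
      ∀ m : ℕ, (0 ≤ v m q.1 q.2 ∧ v m q.1 q.2 ≤ M) ∧
        (φ^[m] σs * v (m + 1) q.1 q.2 ≤ v (m + 2) q.1 q.2 ∧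
          v (m + 2) q.1 q.2 ≤ v (m + 1) q.1 q.2) :=
    ae_all_iff.2 fun m => (hv_bdd m).and (hv_sandwich m)
  -- key pointwise consequences
  have hKey : ∀ᵐ q ∂(μ.prod (volume.restrict (Ioi (0:ℝ)))),
      (∀ m : ℕ, 0 ≤ v (m + 1) q.1 q.2 - v (m + 2) q.1 q.2 ∧
        v (m + 1) q.1 q.2 - v (m + 2) q.1 q.2 ≤ M * (1 - σs) * k ^ m) ∧
      (k < 1 →
        (∀ m p : ℕ, 0 ≤ v (m + 1) q.1 q.2 - v (m + p + 2) q.1 q.2 ∧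
          v (m + 1) q.1 q.2 - v (m + p + 2) q.1 q.2 ≤ C * k ^ m) ∧
        (∀ m : ℕ, |v (m + 1) q.1 q.2 - ⨅ n, v (n + 1) q.1 q.2| ≤ C * k ^ m)) := by
    filter_upwards [hA] with q hq
    have hub : ∀ n, 0 ≤ v n q.1 q.2 ∧ v n q.1 q.2 ≤ M := fun n => (hq n).1
    have hsand : ∀ m : ℕ, φ^[m] σs * v (m + 1) q.1 q.2 ≤ v (m + 2) q.1 q.2 ∧
        v (m + 2) q.1 q.2 ≤ v (m + 1) q.1 q.2 := fun m => (hq m).2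
    have hanti : Antitone (fun n => v (n + 1) q.1 q.2) :=
      antitone_nat_of_succ_le fun n => (hsand n).2
    have hd : ∀ m : ℕ, 0 ≤ v (m + 1) q.1 q.2 - v (m + 2) q.1 q.2 ∧
        v (m + 1) q.1 q.2 - v (m + 2) q.1 q.2 ≤ M * (1 - σs) * k ^ m := by
      intro m
      obtain ⟨hs1, hs2, hs3⟩ := hiter m
      obtain ⟨hb0, hbM⟩ := hub (m + 1)
      obtain ⟨hlo, hhi⟩ := hsand m
      refine ⟨by linarith, ?_⟩
      nlinarith [mul_nonneg (by linarith : (0:ℝ) ≤ 1 - φ^[m] σs)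
          (by linarith : (0:ℝ) ≤ M - v (m + 1) q.1 q.2),
        mul_nonneg (by linarith : (0:ℝ) ≤ k ^ m * (1 - σs) - (1 - φ^[m] σs)) hM.le]
    refine ⟨hd, fun hk1 => ?_⟩
    have h1k : 0 < 1 - k := by linarith
    have htel : ∀ m p : ℕ, v (m + 1) q.1 q.2 - v (m + p + 2) q.1 q.2 ≤ C * k ^ m := by
      intro m p
      have hsum : v (m + 1) q.1 q.2 - v (m + p + 2) q.1 q.2 ≤
          ∑ j ∈ Finset.range (p + 1), M * (1 - σs) * k ^ (m + j) := by
        induction p with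
        | zero => simpa using (hd m).2
        | succ n ih =>
          rw [Finset.sum_range_succ]
          have h2 := (hd (m + n + 1)).2
          have e1 : m + (n + 1) + 2 = m + n + 1 + 2 := by ring
          have e2 : m + (n + 1) = m + n + 1 := by ring
          rw [e1, e2]
          linarith
      have hsum2 : ∑ j ∈ Finset.range (p + 1), M * (1 - σs) * k ^ (m + j) =
          M * (1 - σs) * k ^ m * ∑ j ∈ Finset.range (p + 1), k ^ j := by
        rw [Finset.mul_sum]
        exact Finset.sum_congr rfl fun j _ => by rw [pow_add]; ring
      have hgeo : ∑ j ∈ Finset.range (p + 1), k ^ j ≤ 1 / (1 - k) := by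
        rw [geom_sum_eq hk1.ne]
        have he : (k ^ (p + 1) - 1) / (k - 1) = (1 - k ^ (p + 1)) / (1 - k) := by
          rw [← neg_div_neg_eq]; ring_nf
        rw [he]
        have hp0 : 0 ≤ k ^ (p + 1) := pow_nonneg hk0.le _
        gcongr
        linarith
      have hfac : 0 ≤ M * (1 - σs) * k ^ m :=
        mul_nonneg (mul_nonneg hM.le (by linarith)) (pow_nonneg hk0.le m)
      have : v (m + 1) q.1 q.2 - v (m + p + 2) q.1 q.2 ≤
          M * (1 - σs) * k ^ m * (1 / (1 - k)) := by
        calc v (m + 1) q.1 q.2 - v (m + p + 2) q.1 q.2 ≤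
            M * (1 - σs) * k ^ m * ∑ j ∈ Finset.range (p + 1), k ^ j := by
              rw [← hsum2]; exact hsum
          _ ≤ M * (1 - σs) * k ^ m * (1 / (1 - k)) :=
              mul_le_mul_of_nonneg_left hgeo hfac
      calc v (m + 1) q.1 q.2 - v (m + p + 2) q.1 q.2 ≤
          M * (1 - σs) * k ^ m * (1 / (1 - k)) := this
        _ = C * k ^ m := by rw [hC]; field_simp
    have htel0 : ∀ m p : ℕ, 0 ≤ v (m + 1) q.1 q.2 - v (m + p + 2) q.1 q.2 := by
      intro m p
      have h : v (m + p + 2) q.1 q.2 ≤ v (m + 1) q.1 q.2 :=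
        hanti (Nat.le_add_right m (p + 1))
      linarith
    refine ⟨fun m p => ⟨htel0 m p, htel m p⟩, ?_⟩
    intro m
    have hbdd : BddBelow (Set.range fun n => v (n + 1) q.1 q.2) := by
      refine ⟨0, ?_⟩
      rintro x ⟨n, rfl⟩
      exact (hub (n + 1)).1
    have hCk0 : 0 ≤ C * k ^ m :=
      mul_nonneg (div_nonneg (mul_nonneg hM.le (by linarith)) h1k.le) (pow_nonneg hk0.le m)
    have h1 : (⨅ n, v (n + 1) q.1 q.2) ≤ v (m + 1) q.1 q.2 := ciInf_le hbdd m
    have h2 : v (m + 1) q.1 q.2 - C * k ^ m ≤ ⨅ n, v (n + 1) q.1 q.2 := by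
      apply le_ciInf
      intro n
      rcases le_or_gt n m with h | h
      · have h' : v (m + 1) q.1 q.2 ≤ v (n + 1) q.1 q.2 := hanti h
        linarith
      · obtain ⟨p, rfl⟩ := Nat.exists_eq_add_of_lt h
        have := htel m p
        have e : m + p + 2 = m + p + 1 + 1 := by ring
        rw [e] at this
        linarith
    rw [abs_of_nonneg (by linarith)]
    linarith
  refine ⟨?_, ?_⟩
  · intro m
    filter_upwards [hKey] with q hq
    exact hq.1 m
  · intro hk1
    have h1k : 0 < 1 - k := by linarith
    have hC0 : 0 < C := div_pos (mul_pos hM (by linarith)) h1k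
    constructor
    · intro m p
      filter_upwards [hKey] with q hq
      exact (hq.2 hk1).1 m p
    · refine ⟨fun x t => ⨅ n, v (n + 1) x t, ?_⟩
      intro δ hδ
      obtain ⟨N, hN⟩ := exists_pow_lt_of_lt_one (div_pos hδ hC0) hk1
      refine ⟨N + 1, fun m hm => ?_⟩
      obtain ⟨p, rfl⟩ := Nat.exists_eq_add_of_le hm
      filter_upwards [hKey] with q hq
      have h := (hq.2 hk1).2 (N + p)
      have hk' : k ^ (N + p) ≤ k ^ N :=
        pow_le_pow_of_le_one hk0.le hk1.le (Nat.le_add_right N p)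
      have hmul : C * k ^ (N + p) ≤ C * k ^ N :=
        mul_le_mul_of_nonneg_left hk' hC0.le
      have hlt : C * k ^ N < δ := by
        have := (lt_div_iff₀ hC0).1 hN
        linarith
      have e : N + 1 + p = N + p + 1 := by ring
      rw [e]
      calc |v (N + p + 1) q.1 q.2 - (fun x t => ⨅ n, v (n + 1) x t) q.1 q.2|
          = |v (N + p + 1) q.1 q.2 - ⨅ n, v (n + 1) q.1 q.2| := rfl
        _ ≤ C * k ^ (N + p) := h
        _ ≤ δ := by linarith
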